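/- For every ε > 0 there exists δ > 0 such that whenever A is a C*-algebra and a, x ∈ A satisfy ‖a‖ ≤ 1, 0 ≤ x, ‖x‖ ≤ 1, and ‖x a − a x‖ < δ, then ‖x^{1/2} a − a x^{1/2}‖ < ε. -/

import Mathlib

open Polynomial Finset

private def mpow {A : Type} [NonUnitalRing A] (x : A) : ℕ → A
  | 0 => x
  | n + 1 => x * mpow x n

private lemma norm_mpow_le {A : Type} [NonUnitalCStarAlgebra A] (x : A) (hx : ‖x‖ ≤ 1) :
    ∀ n, ‖mpow x n‖ ≤ 1
  | 0 => hx
  | n + 1 => by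
    calc ‖x * mpow x n‖ ≤ ‖x‖ * ‖mpow x n‖ := norm_mul_le _ _
    _ ≤ 1 * 1 := mul_le_mul hx (norm_mpow_le x hx n) (norm_nonneg _) zero_le_one
    _ = 1 := one_mul 1

private lemma comm_mpow_le {A : Type} [NonUnitalCStarAlgebra A] (x a : A) (hx : ‖x‖ ≤ 1) :
    ∀ n, ‖mpow x n * a - a * mpow x n‖ ≤ (n + 1 : ℝ) * ‖x * a - a * x‖
  | 0 => by simp [mpow]
  | n + 1 => by
    have key : mpow x (n + 1) * a - a * mpow x (n + 1)
        = x * (mpow x n * a - a * mpow x n) + (x * a - a * x) * mpow x n := by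
      simp only [mpow]; noncomm_ring
    rw [key]
    have h1 := comm_mpow_le x a hx n
    have h2 := norm_mpow_le x hx n
    calc _ ≤ ‖x * (mpow x n * a - a * mpow x n)‖ + ‖(x * a - a * x) * mpow x n‖ :=
          norm_add_le _ _
      _ ≤ ‖x‖ * ‖mpow x n * a - a * mpow x n‖ + ‖x * a - a * x‖ * ‖mpow x n‖ :=
          add_le_add (norm_mul_le _ _) (norm_mul_le _ _)
      _ ≤ 1 * ((n + 1 : ℝ) * ‖x * a - a * x‖) + ‖x * a - a * x‖ * 1 := by
          gcongr <;> first | exact hx | exact h1 | exact h2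
      _ = ((n : ℝ) + 1 + 1) * ‖x * a - a * x‖ := by ring
      _ = (((n : ℕ) + 1 : ℕ) + 1 : ℝ) * ‖x * a - a * x‖ := by push_cast; ring

private lemma cfcₙ_pow_eq {A : Type} [NonUnitalCStarAlgebra A] [PartialOrder A]
    [StarOrderedRing A] (x : A) (hx : 0 ≤ x) :
    ∀ n, cfcₙ (fun t : ℝ => t ^ (n + 1)) x = mpow x n
  | 0 => by simpa [mpow] using cfcₙ_id' ℝ x
  | n + 1 => by
    have h : (fun t : ℝ => t ^ (n + 1 + 1)) = fun t : ℝ => t * t ^ (n + 1) := by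
      ext t; ring
    rw [h, cfcₙ_mul (fun t => t) (fun t => t ^ (n + 1)) x, cfcₙ_id' ℝ x,
      cfcₙ_pow_eq x hx n]
    rfl

theorem stmt_14 (ε : ℝ) (hε : 0 < ε) :
    ∃ δ > 0, ∀ (A : Type) [NonUnitalCStarAlgebra A] [PartialOrder A] [StarOrderedRing A]
      (a x : A),
      ‖a‖ ≤ 1 → 0 ≤ x → ‖x‖ ≤ 1 → ‖x * a - a * x‖ < δ →
      ‖cfcₙ Real.sqrt x * a - a * cfcₙ Real.sqrt x‖ < ε := by
  obtain ⟨q, hq⟩ := exists_polynomial_near_of_continuousOn 0 1 Real.sqrt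
    Real.continuous_sqrt.continuousOn (ε / 8) (by positivity)
  set p : ℝ[X] := q - Polynomial.C (q.coeff 0) with hpdef
  have hp0 : p.coeff 0 = 0 := by simp [hpdef]
  have hpeval : ∀ t : ℝ, p.eval t = q.eval t - q.coeff 0 := by
    intro t; simp [hpdef]
  have hpz : p.eval 0 = 0 := by rw [← Polynomial.coeff_zero_eq_eval_zero, hp0]
  have happrox : ∀ t ∈ Set.Icc (0:ℝ) 1, |p.eval t - Real.sqrt t| < ε / 4 := by
    intro t ht
    have h1 := hq t ht
    have h0 := hq 0 (by norm_num)
    rw [Real.sqrt_zero, sub_zero, ← Polynomial.coeff_zero_eq_eval_zero] at h0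
    rw [hpeval]
    have heq : q.eval t - q.coeff 0 - Real.sqrt t = (q.eval t - Real.sqrt t) + -(q.coeff 0) := by
      ring
    calc |q.eval t - q.coeff 0 - Real.sqrt t|
        ≤ |q.eval t - Real.sqrt t| + |q.coeff 0| := by
          rw [heq]; exact (abs_add_le _ _).trans (by rw [abs_neg])
      _ < ε / 8 + ε / 8 := add_lt_add h1 h0
      _ = ε / 4 := by ring
  set C : ℝ := ∑ n ∈ Finset.range (p.natDegree + 1), |p.coeff n| * n with hCdef
  have hC0 : 0 ≤ C := Finset.sum_nonneg fun n _ => by positivity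
  refine ⟨ε / (2 * (C + 1)), by positivity, ?_⟩
  intro A _ _ _ a x ha hx hx1 hcomm
  have hsa : IsSelfAdjoint x := .of_nonneg hx
  have hspec : quasispectrum ℝ x ⊆ Set.Icc (0:ℝ) 1 := by
    intro t ht
    refine ⟨quasispectrum_nonneg_of_nonneg x hx t ht, ?_⟩
    have h := norm_apply_le_norm_cfcₙ (fun t : ℝ => t) x ht (by fun_prop) rfl hsa
    rw [cfcₙ_id' ℝ x] at h
    exact (le_abs_self t).trans (h.trans hx1)
  set g : ℝ → ℝ := fun t => Real.sqrt t - p.eval t with hgdef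
  have hgc : ContinuousOn g (quasispectrum ℝ x) :=
    Continuous.continuousOn (by fun_prop)
  have hg0 : g 0 = 0 := by simp [hgdef, hpz]
  have hsplit : cfcₙ Real.sqrt x = cfcₙ g x + cfcₙ (fun t => p.eval t) x := by
    rw [← cfcₙ_add g (fun t => p.eval t) x hgc hg0 (Polynomial.continuous p).continuousOn hpz]
    congr 1
    ext t
    simp [hgdef]
  have hgnorm : ‖cfcₙ g x‖ ≤ ε / 4 := by
    refine norm_cfcₙ_le fun t ht => ?_
    simp only [hgdef]
    rw [Real.norm_eq_abs, abs_sub_comm]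
    exact (happrox t (hspec ht)).le
  -- polynomial part
  have hps : cfcₙ (fun t => p.eval t) x
      = ∑ n ∈ Finset.range (p.natDegree + 1), p.coeff n • cfcₙ (fun t : ℝ => t ^ n) x := by
    have hfun : (fun t : ℝ => p.eval t)
        = ∑ n ∈ Finset.range (p.natDegree + 1), fun t : ℝ => p.coeff n * t ^ n := by
      ext t
      simp [Polynomial.eval_eq_sum_range]
    rw [hfun, cfcₙ_sum _ x _ (fun i _ => by fun_prop)
      (fun i hi => by
        rcases Nat.eq_zero_or_pos i with rfl | hi'
        · simp [hp0]
        · simp [zero_pow hi'.ne'])]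
    refine Finset.sum_congr rfl fun n hn => ?_
    rcases Nat.eq_zero_or_pos n with rfl | hn'
    · simp [hp0]
    · exact cfcₙ_const_mul (p.coeff n) (fun t : ℝ => t ^ n) x (by fun_prop)
        (by simp [zero_pow hn'.ne'])
  set y : ℕ → A := fun n => cfcₙ (fun t : ℝ => t ^ n) x with hydef
  have hycomm : ∀ n, ‖y n * a - a * y n‖ ≤ (n : ℝ) * ‖x * a - a * x‖ := by
    intro n
    rcases Nat.eq_zero_or_pos n with rfl | hn'
    · have : y 0 = 0 := by
        rw [hydef]
        exact cfcₙ_apply_of_not_map_zero x (by norm_num)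
      simp [this]
    · obtain ⟨m, rfl⟩ := Nat.exists_eq_add_of_lt hn'
      have : y (0 + m + 1) = mpow x m := by
        rw [hydef]; simpa using cfcₙ_pow_eq x hx m
      rw [this]
      simpa using comm_mpow_le x a hx1 m
  set S : A := ∑ n ∈ Finset.range (p.natDegree + 1), p.coeff n • y n with hSdef
  have hScomm : S * a - a * S
      = ∑ n ∈ Finset.range (p.natDegree + 1), p.coeff n • (y n * a - a * y n) := by
    rw [hSdef, Finset.sum_mul, Finset.mul_sum, ← Finset.sum_sub_distrib]
    refine Finset.sum_congr rfl fun n _ => ?_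
    rw [smul_mul_assoc, mul_smul_comm, smul_sub]
  have hSnorm : ‖S * a - a * S‖ ≤ C * ‖x * a - a * x‖ := by
    rw [hScomm, hCdef, Finset.sum_mul]
    refine (norm_sum_le _ _).trans (Finset.sum_le_sum fun n _ => ?_)
    rw [norm_smul, Real.norm_eq_abs, mul_assoc]
    exact mul_le_mul_of_nonneg_left (hycomm n) (abs_nonneg _)
  have hfinal : cfcₙ Real.sqrt x * a - a * cfcₙ Real.sqrt x
      = (cfcₙ g x * a - a * cfcₙ g x) + (S * a - a * S) := by
    rw [hsplit, hps]; noncomm_ring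
  rw [hfinal]
  have h1 : ‖cfcₙ g x * a - a * cfcₙ g x‖ ≤ ε / 2 := by
    calc _ ≤ ‖cfcₙ g x * a‖ + ‖a * cfcₙ g x‖ := norm_sub_le _ _
      _ ≤ ‖cfcₙ g x‖ * ‖a‖ + ‖a‖ * ‖cfcₙ g x‖ := add_le_add (norm_mul_le _ _) (norm_mul_le _ _)
      _ ≤ (ε / 4) * 1 + 1 * (ε / 4) := by
          gcongr <;> first | exact ha | exact hgnorm | positivity
      _ = ε / 2 := by ring
  have h2 : ‖S * a - a * S‖ < ε / 2 := by
    have hlt : C * ‖x * a - a * x‖ ≤ C * (ε / (2 * (C + 1))) :=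
      mul_le_mul_of_nonneg_left hcomm.le hC0
    have hC1 : (0:ℝ) < C + 1 := by linarith
    have h4 : C * (ε / (2 * (C + 1))) < ε / 2 := by
      rw [← mul_div_assoc, div_lt_div_iff₀ (by positivity) (by norm_num : (0:ℝ) < 2)]
      nlinarith
    linarith [hSnorm]
  calc ‖_ + _‖ ≤ ‖cfcₙ g x * a - a * cfcₙ g x‖ + ‖S * a - a * S‖ := norm_add_le _ _
    _ < ε / 2 + ε / 2 := add_lt_add_of_le_of_lt h1 h2
    _ = ε := by ring
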